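/- For all complex z with |z - 1/2| ≤ 1/2 and all positive integers n, |z^n - 1| ≥ |z - 1|. -/

import Mathlib

open Real

set_option maxHeartbeats 1000000

/-- Bernoulli-type product bound: `(1-u)^k * (1 + k*u) ≤ 1` for `u ∈ [0,1]`. -/
lemma bern_aux (k : ℕ) (u : ℝ) (h1 : u ≤ 1) :
    (1 - u) ^ k * (1 + (k : ℝ) * u) ≤ 1 := by
  induction k with
  | zero => simp
  | succ k ih =>
    have h2 : (0:ℝ) ≤ 1 - u := by linarith
    have h3 : (1 - u) ^ (k+1) * (1 + ((k:ℝ)+1) * u)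
        = (1 - u) ^ k * ((1 - u) * (1 + ((k:ℝ)+1) * u)) := by ring
    have h4 : (1 - u) * (1 + ((k:ℝ)+1) * u) ≤ 1 + (k:ℝ) * u := by nlinarith [sq_nonneg u]
    have h5 : (1 - u) ^ k * ((1 - u) * (1 + ((k:ℝ)+1) * u)) ≤ (1 - u) ^ k * (1 + (k:ℝ) * u) :=
      mul_le_mul_of_nonneg_left h4 (pow_nonneg h2 k)
    push_cast
    calc (1 - u) ^ (k+1) * (1 + ((k:ℝ)+1) * u) ≤ (1 - u) ^ k * (1 + (k:ℝ) * u) := by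
          rw [h3]; exact h5
      _ ≤ 1 := ih

/-- Core of case B: if `sin(Nt/2)² < (s/2)²` then `N t ≥ 2π - t`. -/
lemma claim1_aux (N t : ℝ) (hN2 : 2 ≤ N) (ht_pos : 0 < t) (ht : t < π/2)
    (hsinN : Real.sin (N*t/2)^2 < (Real.sin t / 2)^2) : 2*π - t ≤ N*t := by
  have hπ : (0:ℝ) < π := Real.pi_pos
  have hs_pos : 0 < Real.sin t := Real.sin_pos_of_pos_of_lt_pi ht_pos (by linarith)
  by_contra hcon
  push_neg at hcon
  have hx0t : t ≤ N*t/2 := by nlinarith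
  rcases le_or_gt (N*t/2) (π/2) with hle | hgt
  · have hmono : Real.sin t ≤ Real.sin (N*t/2) := by
      rcases hx0t.lt_or_eq with h | h
      · exact le_of_lt (Real.strictMonoOn_sin ⟨by linarith, by linarith⟩ ⟨by linarith, hle⟩ h)
      · rw [← h]
    have hnn : 0 ≤ Real.sin (N*t/2) := le_trans hs_pos.le hmono
    nlinarith
  · have h1 : Real.sin (N*t/2) = Real.sin (π - N*t/2) := (Real.sin_pi_sub _).symm
    have h2 : t/2 < π - N*t/2 := by linarith
    have h3 : π - N*t/2 < π/2 := by linarith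
    have hmono : Real.sin (t/2) < Real.sin (π - N*t/2) :=
      Real.strictMonoOn_sin ⟨by linarith, by linarith⟩ ⟨by linarith, by linarith⟩ h2
    have h4 : 0 ≤ Real.sin (t/2) :=
      Real.sin_nonneg_of_nonneg_of_le_pi (by linarith) (by linarith)
    have hsin_half : Real.sin t ≤ 2 * Real.sin (t/2) := by
      have e1 : Real.sin t = 2 * Real.sin (t/2) * Real.cos (t/2) := by
        rw [show t = 2*(t/2) by ring, Real.sin_two_mul]; ring_nf
      have e2 : Real.cos (t/2) ≤ 1 := Real.cos_le_one _
      nlinarith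
    rw [h1] at hsinN
    nlinarith

/-- Case B main bound : `c^k * (1 + s) ≤ 1`. -/
lemma caseB_aux (k : ℕ) (t : ℝ) (ht_pos : 0 < t) (ht : t < π/2)
    (hNt : 2*π - t ≤ ((k:ℝ)+2)*t) (hk2 : 2 ≤ k) :
    (Real.cos t)^k * (1 + Real.sin t) ≤ 1 := by
  have hπ : (0:ℝ) < π := Real.pi_pos
  have hc : 0 < Real.cos t := Real.cos_pos_of_mem_Ioo ⟨by linarith, ht⟩
  have hc1 : Real.cos t ≤ 1 := Real.cos_le_one t
  have hs0 : 0 ≤ Real.sin t := Real.sin_nonneg_of_nonneg_of_le_pi ht_pos.le (by linarith)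
  have hs1 : Real.sin t ≤ 1 := Real.sin_le_one t
  have hsc : Real.sin t ^2 + Real.cos t ^2 = 1 := Real.sin_sq_add_cos_sq t
  set c := Real.cos t
  set s := Real.sin t
  have hkR : (2:ℝ) ≤ (k:ℝ) := by exact_mod_cast hk2
  rcases le_or_gt (π/4) t with hB1 | hB2
  · -- t ≥ π/4 : c² ≤ 1/2 and c^k ≤ c²
    have hcos4 : c ≤ Real.cos (π/4) :=
      Real.cos_le_cos_of_nonneg_of_le_pi (by positivity) (by linarith) hB1
    have h4 : Real.cos (π/4) = Real.sqrt 2 / 2 := Real.cos_pi_div_four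
    have h5 : (Real.sqrt 2 / 2)^2 = 1/2 := by
      rw [div_pow, Real.sq_sqrt (by norm_num : (0:ℝ) ≤ 2)]; norm_num
    have hc2 : c^2 ≤ 1/2 := by nlinarith
    have hρc2 : c^k ≤ c^2 := pow_le_pow_of_le_one hc.le hc1 hk2
    have hck0 : 0 < c^k := pow_pos hc k
    nlinarith
  · -- t < π/4
    have hj : 2/π * t ≤ s := Real.mul_le_sin ht_pos.le (by linarith)
    have hK1 : (1:ℝ) ≤ (k:ℝ) - 1 := by linarith
    have hKt : π ≤ ((k:ℝ)-1) * t := by nlinarith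
    have hKs : 2 ≤ ((k:ℝ)-1) * s := by
      have h1 : ((k:ℝ)-1) * (2/π * t) ≤ ((k:ℝ)-1) * s := mul_le_mul_of_nonneg_left hj (by linarith)
      have h3 : 2/π * π ≤ 2/π * (((k:ℝ)-1)*t) := mul_le_mul_of_nonneg_left hKt (by positivity)
      have h4 : 2/π * π = 2 := by field_simp
      nlinarith
    have hsq : (1 + s)^2 ≤ 1 + (k:ℝ) * s^2 := by nlinarith
    have hbern : (1 - s^2)^k * (1 + (k:ℝ) * s^2) ≤ 1 := bern_aux k (s^2) (by nlinarith)
    have hc2s : c^2 = 1 - s^2 := by linarith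
    have hck0 : 0 < c^k := pow_pos hc k
    have hsq2 : (c^k * (1+s))^2 ≤ 1 := by
      have e1 : (c^k * (1+s))^2 = (c^2)^k * (1+s)^2 := by
        rw [mul_pow, pow_right_comm]
      have e2 : (c^2)^k * (1+s)^2 ≤ (c^2)^k * (1 + (k:ℝ)*s^2) :=
        mul_le_mul_of_nonneg_left hsq (by positivity)
      rw [e1, hc2s]
      rw [hc2s] at e2
      calc (1 - s^2)^k * (1+s)^2 ≤ (1 - s^2)^k * (1 + (k:ℝ)*s^2) := e2
        _ ≤ 1 := hbern
    nlinarith [mul_nonneg hck0.le (by linarith : (0:ℝ) ≤ 1 + s)]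

/-- Key step (H): `2 c^m cos((m+1)t) ≤ c (1 + (c^m)²)` for `c = cos t`, `t ∈ [0, π/2)`. -/
lemma step_b (m : ℕ) (t : ℝ) (ht0 : 0 ≤ t) (ht : t < π/2) :
    2 * (Real.cos t)^m * Real.cos (((m:ℝ)+1)*t) ≤ Real.cos t * (1 + ((Real.cos t)^m)^2) := by
  have hπ : (0:ℝ) < π := Real.pi_pos
  have hc : 0 < Real.cos t := Real.cos_pos_of_mem_Ioo ⟨by linarith, ht⟩
  have hc1 : Real.cos t ≤ 1 := Real.cos_le_one t
  match m with
  | 0 =>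
    simp only [pow_zero, Nat.cast_zero, zero_add, one_mul]
    nlinarith
  | (k+1) =>
    have hs0 : 0 ≤ Real.sin t := Real.sin_nonneg_of_nonneg_of_le_pi ht0 (by linarith)
    have hs1 : Real.sin t ≤ 1 := Real.sin_le_one t
    have hsc : Real.sin t^2 + Real.cos t^2 = 1 := Real.sin_sq_add_cos_sq t
    set c := Real.cos t
    set s := Real.sin t
    have hρ0 : 0 < c ^ k := pow_pos hc k
    have hρ1 : c ^ k ≤ 1 := pow_le_one₀ hc.le hc1
    have hNt : Real.cos (((k:ℝ)+1+1)*t) = Real.cos (((k:ℝ)+2)*t) := by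
      rw [show ((k:ℝ)+1+1) = (k:ℝ)+2 by ring]
    have key : 2 * c^k * Real.cos (((k:ℝ)+2)*t) ≤ 1 + (c^k)^2 * c^2 := by
      have hX1 : Real.cos (((k:ℝ)+2)*t) ≤ 1 := Real.cos_le_one _
      by_cases hA : s^2 ≤ 2*(1 - Real.cos (((k:ℝ)+2)*t))
      · nlinarith [sq_nonneg (1 - c^k), mul_le_mul_of_nonneg_left hA hρ0.le,
          mul_le_mul_of_nonneg_right hρ1 (mul_nonneg hρ0.le (sq_nonneg s))]
      push_neg at hA
      -- Case B
      have hs_pos : 0 < s := by nlinarith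
      have ht_pos : 0 < t := by
        by_contra hcon
        push_neg at hcon
        have ht00 : t = 0 := le_antisymm hcon ht0
        have hz : s = 0 := by show Real.sin t = 0; rw [ht00, Real.sin_zero]
        linarith
      have hhalf : 1 - Real.cos (((k:ℝ)+2)*t) = 2 * Real.sin (((k:ℝ)+2)*t/2)^2 := by
        have h1 := Real.cos_two_mul (((k:ℝ)+2)*t/2)
        rw [show 2*(((k:ℝ)+2)*t/2) = ((k:ℝ)+2)*t by ring] at h1
        have h2 := Real.sin_sq_add_cos_sq (((k:ℝ)+2)*t/2)
        linarith
      have hsinN : Real.sin (((k:ℝ)+2)*t/2)^2 < (s/2)^2 := by nlinarith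
      have hN2 : (2:ℝ) ≤ (k:ℝ)+2 := by
        have hkc : (0:ℝ) ≤ (k:ℝ) := Nat.cast_nonneg k
        linarith
      have claim1 : 2*π - t ≤ ((k:ℝ)+2)*t := claim1_aux ((k:ℝ)+2) t hN2 ht_pos ht hsinN
      have hk2 : 2 ≤ k := by
        by_contra h
        push_neg at h
        have hle1 : (k:ℝ) ≤ 1 := by exact_mod_cast Nat.lt_succ_iff.mp h
        have : ((k:ℝ)+2)*t ≤ 3*t := mul_le_mul_of_nonneg_right (by linarith) ht_pos.le
        linarith
      have hmain : c^k * (1 + s) ≤ 1 := caseB_aux k t ht_pos ht claim1 hk2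
      -- conclude
      have f1 : (0:ℝ) ≤ 1 - c^k * (1+s) := by linarith
      have f2 : (0:ℝ) ≤ 1 - c^k + c^k*s := by nlinarith [mul_nonneg hρ0.le hs0]
      have hp : (0:ℝ) ≤ 1 - 2*(c^k) + (c^k)^2 - (c^k)^2*s^2 := by nlinarith [mul_nonneg f1 f2]
      have hcs2 : (c^k)^2 * c^2 = (c^k)^2 - (c^k)^2*s^2 := by nlinarith [sq_nonneg (c^k)]
      have hX2 : 2*(c^k)*Real.cos (((k:ℝ)+2)*t) ≤ 2*(c^k) := by
        nlinarith [mul_le_mul_of_nonneg_left hX1 (show (0:ℝ) ≤ 2*c^k by linarith)]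
      linarith
    have h1 : c * (2 * c^k * Real.cos (((k:ℝ)+2)*t)) ≤ c * (1 + (c^k)^2 * c^2) :=
      mul_le_mul_of_nonneg_left key hc.le
    push_cast
    rw [hNt, pow_succ]
    linear_combination h1

/-- Main trig inequality: for `0 ≤ t < π/2`, `0 < r ≤ cos t`:
`2 r^m cos((m+1) t) ≤ cos t (1 + (r^m)²)`. -/
lemma trig_main (m : ℕ) (t r : ℝ) (ht0 : 0 ≤ t) (ht : t < π/2)
    (hr : 0 < r) (hrc : r ≤ Real.cos t) :
    2 * r^m * Real.cos (((m:ℝ)+1)*t) ≤ Real.cos t * (1 + (r^m)^2) := by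
  have hπ : (0:ℝ) < π := Real.pi_pos
  have hc : 0 < Real.cos t := Real.cos_pos_of_mem_Ioo ⟨by linarith, ht⟩
  have hc1 : Real.cos t ≤ 1 := Real.cos_le_one t
  set c := Real.cos t with hc_def
  have hr1 : r ≤ 1 := hrc.trans hc1
  have hrm : 0 < r^m := pow_pos hr m
  have hcm : 0 < c^m := pow_pos hc m
  have hrcm : r^m ≤ c^m := pow_le_pow_left₀ hr.le hrc m
  have hcm1 : c^m ≤ 1 := pow_le_one₀ hc.le hc1
  have hrm1 : r^m ≤ 1 := hrcm.trans hcm1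
  by_cases hcos : Real.cos (((m:ℝ)+1)*t) ≤ 0
  · nlinarith [sq_nonneg (r^m)]
  push_neg at hcos
  have hb := step_b m t ht0 ht
  rw [← hc_def] at hb
  -- step (a): r^m (1 + (c^m)²) ≤ c^m (1 + (r^m)²)
  have ha : r^m * (1 + (c^m)^2) ≤ c^m * (1 + (r^m)^2) := by
    nlinarith [mul_nonneg (sub_nonneg.2 hrcm) (sub_nonneg.2 (show c^m * r^m ≤ 1 by nlinarith))]
  have h2 : 2 * r^m * Real.cos (((m:ℝ)+1)*t) * (1 + (c^m)^2)
      ≤ 2 * c^m * Real.cos (((m:ℝ)+1)*t) * (1 + (r^m)^2) := by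
    nlinarith [mul_le_mul_of_nonneg_left ha (show (0:ℝ) ≤ 2 * Real.cos (((m:ℝ)+1)*t) by linarith)]
  have h3 : 2 * c^m * Real.cos (((m:ℝ)+1)*t) * (1 + (r^m)^2)
      ≤ c * (1 + (c^m)^2) * (1 + (r^m)^2) := by
    nlinarith [mul_le_mul_of_nonneg_right hb (show (0:ℝ) ≤ 1 + (r^m)^2 by positivity)]
  have h4 : 2 * r^m * Real.cos (((m:ℝ)+1)*t) * (1 + (c^m)^2)
      ≤ c * (1 + (r^m)^2) * (1 + (c^m)^2) := by nlinarith
  have h5 : (0:ℝ) < 1 + (c^m)^2 := by positivity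
  exact le_of_mul_le_mul_right h4 h5

theorem stmt1 (z : ℂ) (hz : ‖z - 1/2‖ ≤ 1/2) (n : ℕ) (hn : 0 < n) :
    ‖z - 1‖ ≤ ‖z ^ n - 1‖ := by
  have hπ : (0:ℝ) < π := Real.pi_pos
  -- disk condition: normSq z ≤ z.re
  have hdisk : Complex.normSq z ≤ z.re := by
    have h1 : ‖z - 1/2‖ ^ 2 ≤ (1/2 : ℝ)^2 := by
      have := norm_nonneg (z - 1/2)
      nlinarith
    rw [Complex.sq_norm, Complex.normSq_apply] at h1
    simp only [Complex.sub_re, Complex.sub_im, Complex.div_ofNat_re, Complex.div_ofNat_im,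
      Complex.one_re, Complex.one_im, Complex.normSq_apply] at *
    nlinarith [h1]
  rcases eq_or_ne z 0 with rfl | hz0
  · rw [zero_pow hn.ne']
  · set r := ‖z‖ with hr_def
    have hr : 0 < r := norm_pos_iff.mpr hz0
    have hre : z.re = r * Real.cos (Complex.arg z) := by
      rw [Complex.cos_arg hz0, ← hr_def]
      field_simp
    have hnsq : Complex.normSq z = r^2 := (Complex.sq_norm z).symm
    -- r ≤ cos (arg z), via cos(arg z) ≥ r
    have hrc' : r^2 ≤ r * Real.cos (Complex.arg z) := by rw [← hre, ← hnsq]; exact hdisk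
    have hrc : r ≤ Real.cos (Complex.arg z) := by
      have := le_of_mul_le_mul_left (by nlinarith : r * r ≤ r * Real.cos (Complex.arg z)) hr
      exact this
    have hcpos : 0 < Real.cos (Complex.arg z) := lt_of_lt_of_le hr hrc
    -- t := |arg z| ∈ [0, π/2)
    set t := |Complex.arg z| with ht_def
    have hct : Real.cos t = Real.cos (Complex.arg z) := Real.cos_abs _
    have ht0 : 0 ≤ t := abs_nonneg _
    have htpi : t ≤ π := abs_le.mpr ⟨by linarith [Complex.neg_pi_lt_arg z], Complex.arg_le_pi z⟩
    have ht : t < π/2 := by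
      by_contra hcon
      push_neg at hcon
      have : Real.cos t ≤ 0 := Real.cos_nonpos_of_pi_div_two_le_of_le hcon (by linarith)
      rw [hct] at this
      linarith
    -- re and normSq of z^n
    have hzn : z ^ n = ((r^n : ℝ) : ℂ) * Complex.exp ((((n : ℝ) * Complex.arg z : ℝ) : ℂ) * Complex.I) := by
      conv_lhs => rw [← Complex.norm_mul_exp_arg_mul_I z, ← hr_def]
      rw [mul_pow, ← Complex.exp_nat_mul]
      push_cast
      ring_nf
    have hren : (z ^ n).re = r^n * Real.cos ((n : ℝ) * Complex.arg z) := by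
      rw [hzn, Complex.re_ofReal_mul, Complex.exp_ofReal_mul_I_re]
    have hcosn : Real.cos ((n:ℝ) * Complex.arg z) = Real.cos ((n:ℝ) * t) := by
      rw [← Real.cos_abs ((n:ℝ) * Complex.arg z), abs_mul, abs_of_nonneg (by positivity : (0:ℝ) ≤ (n:ℝ)), ← ht_def]
    have hnsqn : Complex.normSq (z ^ n) = (r^2)^n := by
      rw [map_pow, hnsq]
    -- reduce to normSq inequality
    rw [Complex.norm_def, Complex.norm_def]
    apply Real.sqrt_le_sqrt
    have e1 : Complex.normSq (z - 1) = Complex.normSq z - 2*z.re + 1 := by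
      simp only [Complex.normSq_apply, Complex.sub_re, Complex.sub_im, Complex.one_re,
        Complex.one_im]
      ring
    have e2 : Complex.normSq (z^n - 1) = Complex.normSq (z^n) - 2*(z^n).re + 1 := by
      simp only [Complex.normSq_apply, Complex.sub_re, Complex.sub_im, Complex.one_re,
        Complex.one_im]
      ring
    rw [e1, e2, hnsq, hnsqn, hren, hcosn, hre, ← hct]
    obtain ⟨m, rfl⟩ : ∃ m, n = m + 1 := ⟨n - 1, (Nat.succ_pred_eq_of_pos hn).symm⟩
    have hrct : r ≤ Real.cos t := by rw [hct]; exact hrc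
    have htm := trig_main m t r ht0 ht hr hrct
    have hcast : ((m+1 : ℕ) : ℝ) = (m:ℝ)+1 := by push_cast; ring
    rw [hcast]
    set u := r^m with hu_def
    have hu0 : 0 < u := pow_pos hr m
    have hr1 : r ≤ 1 := hrct.trans (Real.cos_le_one t)
    have hu1 : u ≤ 1 := pow_le_one₀ hr.le hr1
    have h6 : r^(m+1) = r*u := by rw [pow_succ]; ring
    have h7 : (r^2)^(m+1) = (r*u)^2 := by
      rw [← pow_right_comm, h6]
    rw [h6, h7]
    have h8 : r * (2 * u * Real.cos (((m:ℝ)+1)*t)) ≤ r * (Real.cos t * (1 + u^2)) :=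
      mul_le_mul_of_nonneg_left htm hr.le
    have h9 : 0 ≤ (r * Real.cos t - r^2) * (1 - u^2) := by
      apply mul_nonneg
      · nlinarith
      · nlinarith
    nlinarith [h8, h9]
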